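/- arXiv:0805.4551 — 8 statements merged into one kernel-verified Lean document; each statement's English description precedes it below -/
import Mathlib

section
/- Let $P=(p_{ij})$ be an $n\times n$ matrix with nonnegative entries such that $I-P$ is irreducible, $\det(I-P)<0$, and every proper principal submatrix of $I-P$ is a nonsingular M-matrix. Let $\alpha=(\alpha_1,\dots,\alpha_n)^T$ solve $(I-P)\alpha=-\mathbf{1}$. Then $\alpha_i>0$ for all $i$. -/
/-- A square matrix is irreducible if for every nonempty proper subset `S` of
indices there is a nonzero entry `M i j` with `i ∈ S`, `j ∉ S`. -/
def MatIrreducible {n : ℕ} (M : Matrix (Fin n) (Fin n) ℝ) : Prop :=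
  ∀ S : Set (Fin n), S.Nonempty → S ≠ Set.univ → ∃ i ∈ S, ∃ j, j ∉ S ∧ M i j ≠ 0

/-- A nonsingular M-matrix: nonpositive off-diagonal entries and all principal
minors positive (the standard characterization). -/
def IsNonsingularMMatrix {m : Type*} [Fintype m] [DecidableEq m] (M : Matrix m m ℝ) : Prop :=
  (∀ i j, i ≠ j → M i j ≤ 0) ∧
  ∀ T : Finset m, 0 < (M.submatrix (fun i : T => (i : m)) (fun j : T => (j : m))).det

open Finset

section Aux
variable {m : Type*} [Fintype m] [DecidableEq m]

/-- All principal minors positive, stated for arbitrary injections. -/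
def PosMinors (M : Matrix m m ℝ) : Prop :=
  ∀ (t : ℕ) (g : Fin t → m), Function.Injective g → 0 < (M.submatrix g g).det

lemma sumSplit (k : m) (f : m → ℝ) :
    ∑ j, f j = f k + ∑ j : ↥(Finset.univ.erase k), f ↑j := by
  rw [Finset.sum_coe_sort, ← Finset.sum_erase_add Finset.univ f (Finset.mem_univ k), add_comm]

lemma diagPos (M : Matrix m m ℝ) (hZ : ∀ i j, i ≠ j → M i j ≤ 0)
    (x : m → ℝ) (hx : ∀ i, 0 < x i) (hMx : ∀ i, 0 < M.mulVec x i) (i : m) :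
    0 < M i i := by
  have hsum : ∑ j, M i j * x j = M i i * x i + ∑ j : ↥(Finset.univ.erase i), M i ↑j * x ↑j :=
    sumSplit i _
  have hoff : ∑ j : ↥(Finset.univ.erase i), M i ↑j * x ↑j ≤ 0 := by
    apply Finset.sum_nonpos
    intro j _
    exact mul_nonpos_of_nonpos_of_nonneg (hZ i ↑j (fun h => (Finset.mem_erase.mp j.2).1 h.symm))
      (hx ↑j).le
  have hmv : M.mulVec x i = ∑ j, M i j * x j := by
    simp [Matrix.mulVec, dotProduct]
  have h1 : 0 < M i i * x i := by
    have := hMx i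
    rw [hmv, hsum] at this
    linarith
  by_contra h
  push_neg at h
  nlinarith [hx i]

lemma nonsingOfSemipos (M : Matrix m m ℝ) (hZ : ∀ i j, i ≠ j → M i j ≤ 0)
    (x : m → ℝ) (hx : ∀ i, 0 < x i) (hMx : ∀ i, 0 < M.mulVec x i)
    (y : m → ℝ) (hy : M.mulVec y = 0) : y = 0 := by
  by_contra hne
  obtain ⟨i₀, hi₀⟩ : ∃ i, y i ≠ 0 := by
    by_contra h; push_neg at h; exact hne (funext h)
  obtain ⟨k, -, hk⟩ := Finset.exists_max_image Finset.univ (fun i => |y i| / x i)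
    ⟨i₀, Finset.mem_univ _⟩
  have hdiag : ∀ i, 0 < M i i := diagPos M hZ x hx hMx
  set c := |y k| / x k with hc_def
  have hc : 0 < c := lt_of_lt_of_le (div_pos (abs_pos.mpr hi₀) (hx i₀)) (hk i₀ (Finset.mem_univ _))
  have hbound : ∀ j, |y j| ≤ c * x j := fun j => by
    have := hk j (Finset.mem_univ _)
    calc |y j| = (|y j| / x j) * x j := (div_mul_cancel₀ _ (hx j).ne').symm
    _ ≤ c * x j := by apply mul_le_mul_of_nonneg_right this (hx j).le
  have hck : c * x k = |y k| := by rw [hc_def, div_mul_cancel₀ _ (hx k).ne']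
  have hrowk : M k k * y k = -∑ j : ↥(Finset.univ.erase k), M k ↑j * y ↑j := by
    have h0 : ∑ j, M k j * y j = 0 := by
      have := congrFun hy k
      simpa [Matrix.mulVec, dotProduct] using this
    rw [sumSplit k (fun j => M k j * y j)] at h0
    linarith
  have hxk : ∑ j : ↥(Finset.univ.erase k), M k ↑j * x ↑j = M.mulVec x k - M k k * x k := by
    have : M.mulVec x k = ∑ j, M k j * x j := by simp [Matrix.mulVec, dotProduct]
    rw [this, sumSplit k (fun j => M k j * x j)]
    ring
  have key : M k k * |y k| ≤ c * (M k k * x k - M.mulVec x k) := by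
    calc M k k * |y k| = |M k k * y k| := by
          rw [abs_mul, abs_of_pos (hdiag k)]
    _ = |∑ j : ↥(Finset.univ.erase k), M k ↑j * y ↑j| := by rw [hrowk, abs_neg]
    _ ≤ ∑ j : ↥(Finset.univ.erase k), |M k ↑j * y ↑j| := Finset.abs_sum_le_sum_abs _ _
    _ ≤ ∑ j : ↥(Finset.univ.erase k), (-(M k ↑j)) * (c * x ↑j) := by
          apply Finset.sum_le_sum
          intro j _
          have hne' : M k ↑j ≤ 0 := hZ k ↑j (fun h => (Finset.mem_erase.mp j.2).1 h.symm)
          rw [abs_mul, abs_of_nonpos hne']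
          exact mul_le_mul_of_nonneg_left (hbound ↑j) (neg_nonneg.mpr hne')
    _ = c * (-(∑ j : ↥(Finset.univ.erase k), M k ↑j * x ↑j)) := by
          rw [← Finset.sum_neg_distrib]
          rw [Finset.mul_sum]
          congr 1; funext j; ring
    _ = c * (M k k * x k - M.mulVec x k) := by rw [hxk]; ring
  have hring : c * (M k k * x k - M.mulVec x k) = M k k * (c * x k) - c * M.mulVec x k := by ring
  rw [hring, hck] at key
  nlinarith [mul_pos hc (hMx k)]

lemma detPos (M : Matrix m m ℝ) (hZ : ∀ i j, i ≠ j → M i j ≤ 0)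
    (x : m → ℝ) (hx : ∀ i, 0 < x i) (hMx : ∀ i, 0 < M.mulVec x i) :
    0 < M.det := by
  cases isEmpty_or_nonempty m with
  | inl h => simp [Matrix.det_isEmpty]
  | inr h =>
    set D : Matrix m m ℝ := Matrix.diagonal (fun i => M i i) with hD
    set N : ℝ → Matrix m m ℝ := fun t => (1 - t) • D + t • M with hN
    have hdiag : ∀ i, 0 < M i i := diagPos M hZ x hx hMx
    have hcont : Continuous fun t => (N t).det := by
      apply Continuous.matrix_det
      apply continuous_matrix
      intro i j
      simp only [hN, Matrix.add_apply, Matrix.smul_apply, smul_eq_mul]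
      fun_prop
    have hNx : ∀ t ∈ Set.Icc (0:ℝ) 1, ∀ i, 0 < (N t).mulVec x i := by
      intro t ht i
      have hdx : D.mulVec x i = M i i * x i := Matrix.mulVec_diagonal _ _ _
      have heq : (N t).mulVec x i = (1 - t) * D.mulVec x i + t * M.mulVec x i := by
        rw [hN]
        rw [Matrix.add_mulVec, Matrix.smul_mulVec, Matrix.smul_mulVec]
        simp
      rw [heq, hdx]
      rcases lt_or_ge t 1 with h1 | h1
      · nlinarith [mul_pos (hdiag i) (hx i), hMx i, ht.1,
          mul_nonneg ht.1 (hMx i).le]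
      · have : t = 1 := le_antisymm ht.2 h1
        subst this
        simpa using hMx i
    have hZt : ∀ t ∈ Set.Icc (0:ℝ) 1, ∀ i j, i ≠ j → N t i j ≤ 0 := by
      intro t ht i j hij
      have hD0 : D i j = 0 := Matrix.diagonal_apply_ne _ hij
      have : N t i j = (1 - t) * D i j + t * M i j := rfl
      rw [this, hD0, mul_zero, zero_add]
      exact mul_nonpos_of_nonneg_of_nonpos ht.1 (hZ i j hij)
    have hne : ∀ t ∈ Set.Icc (0:ℝ) 1, (N t).det ≠ 0 := by
      intro t ht h0
      obtain ⟨v, hv, hv0⟩ := Matrix.exists_mulVec_eq_zero_iff.mpr h0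
      exact hv (nonsingOfSemipos (N t) (hZt t ht) x hx (hNx t ht) v hv0)
    have h0 : 0 < (N 0).det := by
      have : N 0 = D := by simp [hN]
      rw [this, hD, Matrix.det_diagonal]
      exact Finset.prod_pos fun i _ => hdiag i
    have h1 : N 1 = M := by simp [hN]
    by_contra h
    push_neg at h
    have hlt : (N 1).det < 0 := by
      rw [h1]; exact lt_of_le_of_ne h (by rw [← h1]; exact hne 1 ⟨zero_le_one, le_refl 1⟩)
    have : (0:ℝ) ∈ Set.Icc ((N 1).det) ((N 0).det) := ⟨hlt.le, h0.le⟩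
    have := intermediate_value_Icc' zero_le_one hcont.continuousOn this
    obtain ⟨t, ht, hft⟩ := this
    exact hne t ht hft

lemma compNonneg (M : Matrix m m ℝ) (hZ : ∀ i j, i ≠ j → M i j ≤ 0)
    (x : m → ℝ) (hx : ∀ i, 0 < x i) (hMx : ∀ i, 0 < M.mulVec x i)
    (y c : m → ℝ) (hy : M.mulVec y = c) (hc : ∀ i, 0 ≤ c i) :
    ∀ i, 0 ≤ y i := by
  by_contra h
  push_neg at h
  obtain ⟨k₀, hk₀⟩ := h
  obtain ⟨k, -, hk⟩ := Finset.exists_max_image Finset.univ (fun i => (-(y i)) / x i)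
    ⟨k₀, Finset.mem_univ _⟩
  set t := (-(y k)) / x k with ht_def
  have ht : 0 < t := lt_of_lt_of_le (div_pos (by linarith) (hx k₀)) (hk k₀ (Finset.mem_univ _))
  have h1 : ∀ j, 0 ≤ y j + t * x j := by
    intro j
    have := hk j (Finset.mem_univ _)
    have h2 : -(y j) ≤ t * x j := by
      calc -(y j) = (-(y j) / x j) * x j := (div_mul_cancel₀ _ (hx j).ne').symm
      _ ≤ t * x j := mul_le_mul_of_nonneg_right this (hx j).le
    linarith
  have h2 : y k + t * x k = 0 := by
    rw [ht_def, div_mul_cancel₀ _ (hx k).ne']; ring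
  have hz : M.mulVec (fun j => y j + t * x j) k = c k + t * M.mulVec x k := by
    have : (fun j => y j + t * x j) = y + t • x := by funext j; simp [mul_comm]
    rw [this, Matrix.mulVec_add, Matrix.mulVec_smul, hy]
    simp
  have hz2 : M.mulVec (fun j => y j + t * x j) k ≤ 0 := by
    have hexp : M.mulVec (fun j => y j + t * x j) k
        = M k k * (y k + t * x k) + ∑ j : ↥(Finset.univ.erase k), M k ↑j * (y ↑j + t * x ↑j) := by
      have : M.mulVec (fun j => y j + t * x j) k = ∑ j, M k j * (y j + t * x j) := by
        simp [Matrix.mulVec, dotProduct]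
      rw [this, sumSplit k (fun j => M k j * (y j + t * x j))]
    rw [hexp, h2]
    simp only [mul_zero, zero_add]
    apply Finset.sum_nonpos
    intro j _
    exact mul_nonpos_of_nonpos_of_nonneg
      (hZ k ↑j (fun hh => (Finset.mem_erase.mp j.2).1 hh.symm)) (h1 ↑j)
  rw [hz] at hz2
  nlinarith [hc k, mul_pos ht (hMx k)]

lemma extendSemipos (M : Matrix m m ℝ) (k : m) (v w : m → ℝ)
    (hvk : v k = 1) (hv : ∀ j, 0 ≤ v j)
    (hv0 : ∀ i, i ≠ k → M.mulVec v i = 0) (hs : 0 < M.mulVec v k)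
    (hwk : w k = 0) (hw : ∀ j, j ≠ k → 0 < w j)
    (hMw : ∀ i, i ≠ k → 0 < M.mulVec w i) :
    ∃ x : m → ℝ, (∀ i, 0 < x i) ∧ ∀ i, 0 < M.mulVec x i := by
  set s := M.mulVec v k with hs_def
  set c0 := M.mulVec w k with hc0_def
  set ε := s / (2 * (|c0| + 1)) with hε_def
  have hε : 0 < ε := by positivity
  refine ⟨v + ε • w, ?_, ?_⟩
  · intro i
    by_cases hik : i = k
    · subst hik; simp [hvk, hwk]
    · have := hw i hik
      have := hv i
      simp only [Pi.add_apply, Pi.smul_apply, smul_eq_mul]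
      nlinarith
  · intro i
    rw [Matrix.mulVec_add, Matrix.mulVec_smul]
    by_cases hik : i = k
    · subst hik
      simp only [Pi.add_apply, Pi.smul_apply, smul_eq_mul, ← hs_def, ← hc0_def]
      have habs : ε * |c0| ≤ s / 2 := by
        rw [hε_def]
        rw [div_mul_eq_mul_div, div_le_div_iff₀ (by positivity) (by norm_num)]
        nlinarith [abs_nonneg c0]
      nlinarith [neg_abs_le c0, abs_nonneg c0]
    · have h1 := hv0 i hik
      have h2 := hMw i hik
      simp only [Pi.add_apply, Pi.smul_apply, smul_eq_mul, h1]
      nlinarith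

lemma posMinors_of_MMatrix {M : Matrix m m ℝ} (hM : IsNonsingularMMatrix M) :
    PosMinors M := by
  intro t g hg
  set T : Finset m := Finset.univ.map ⟨g, hg⟩ with hT
  have hmem : ∀ i : Fin t, g i ∈ T := by
    intro i; rw [hT]; simp
  have hbij : Function.Bijective (fun i : Fin t => (⟨g i, hmem i⟩ : ↥T)) := by
    constructor
    · intro a b hab
      exact hg (congrArg Subtype.val hab)
    · rintro ⟨x, hx⟩
      rw [hT] at hx
      simp only [Finset.mem_map, Finset.mem_univ, Function.Embedding.coeFn_mk] at hx
      obtain ⟨i, -, hi⟩ := hx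
      exact ⟨i, by simp [hi]⟩
  set e : Fin t ≃ ↥T := Equiv.ofBijective _ hbij with he
  have heq : M.submatrix g g
      = (M.submatrix (fun i : T => (i : m)) (fun j : T => (j : m))).submatrix e e := rfl
  rw [heq, Matrix.det_submatrix_equiv_self]
  exact hM.2 T

lemma posMinors_submatrix {M : Matrix m m ℝ} (h : PosMinors M)
    {m' : Type*} [Fintype m'] [DecidableEq m'] (f : m' → m) (hf : Function.Injective f) :
    PosMinors (M.submatrix f f) := by
  intro t g hg
  exact h t (f ∘ g) (hf.comp hg)

lemma posMinors_det {M : Matrix m m ℝ} (h : PosMinors M) : 0 < M.det := by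
  have e := (Fintype.equivFin m).symm
  have := h (Fintype.card m) e e.injective
  rwa [Matrix.det_submatrix_equiv_self] at this

/-- The core "Schur complement sign" lemma. -/
lemma coreLemma (M : Matrix m m ℝ) (hZ : ∀ i j, i ≠ j → M i j ≤ 0) (k : m)
    (B : Matrix (↥(Finset.univ.erase k)) (↥(Finset.univ.erase k)) ℝ)
    (hB : ∀ (i j : ↥(Finset.univ.erase k)), B i j = M ↑i ↑j)
    (x' : ↥(Finset.univ.erase k) → ℝ) (hx' : ∀ j, 0 < x' j)
    (hBx' : ∀ j, 0 < B.mulVec x' j)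
    (hdetB : B.det ≠ 0) :
    ∃ u : ↥(Finset.univ.erase k) → ℝ,
      (∀ j, 0 ≤ u j) ∧
      (B.mulVec u = fun j : ↥(Finset.univ.erase k) => -M (↑j) k) ∧
      (∀ s : ℝ, s = M k k + ∑ j : ↥(Finset.univ.erase k), M k ↑j * u j →
        ((0 < s → ∃ x : m → ℝ, (∀ i, 0 < x i) ∧ ∀ i, 0 < M.mulVec x i) ∧
         (s = 0 → M.det = 0) ∧
         (s < 0 → M.det < 0))) := by
  have hne : ∀ j : ↥(Finset.univ.erase k), (↑j : m) ≠ k := fun j => (Finset.mem_erase.mp j.2).1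
  have hmemS : ∀ j : m, j ≠ k → j ∈ Finset.univ.erase k := fun j hj =>
    Finset.mem_erase.mpr ⟨hj, Finset.mem_univ _⟩
  have hZB : ∀ i j : ↥(Finset.univ.erase k), i ≠ j → B i j ≤ 0 := by
    intro i j hij
    rw [hB]
    exact hZ ↑i ↑j (fun h => hij (Subtype.ext h))
  set c : ↥(Finset.univ.erase k) → ℝ := fun j => -M ↑j k with hc_def
  have hc : ∀ j, 0 ≤ c j := fun j => neg_nonneg.mpr (hZ ↑j k (hne j))
  set u : ↥(Finset.univ.erase k) → ℝ := B⁻¹.mulVec c with hu_def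
  have hBu : B.mulVec u = c := by
    rw [hu_def, Matrix.mulVec_mulVec, Matrix.mul_nonsing_inv _ (isUnit_iff_ne_zero.mpr hdetB),
      Matrix.one_mulVec]
  have hu0 : ∀ j, 0 ≤ u j := compNonneg B hZB x' hx' hBx' u c hBu hc
  refine ⟨u, hu0, hBu, ?_⟩
  intro s hs
  -- the auxiliary vectors v and w on m
  set v : m → ℝ := fun j => if h : j = k then 1 else u ⟨j, hmemS j h⟩ with hv_def
  set w : m → ℝ := fun j => if h : j = k then 0 else x' ⟨j, hmemS j h⟩ with hw_def
  have hvk : v k = 1 := by simp [hv_def]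
  have hwk : w k = 0 := by simp [hw_def]
  have hvj : ∀ j : ↥(Finset.univ.erase k), v ↑j = u j := by
    rintro ⟨j, hj⟩
    simp [hv_def, (Finset.mem_erase.mp hj).1]
  have hwj : ∀ j : ↥(Finset.univ.erase k), w ↑j = x' j := by
    rintro ⟨j, hj⟩
    simp [hw_def, (Finset.mem_erase.mp hj).1]
  have hv0 : ∀ j, 0 ≤ v j := by
    intro j
    by_cases h : j = k
    · simp [hv_def, h]
    · rw [show j = ↑(⟨j, hmemS j h⟩ : ↥(Finset.univ.erase k)) from rfl, hvj]
      exact hu0 _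
  -- mulVec computations
  have hmv : ∀ (z : m → ℝ) (i : m), M.mulVec z i = M i k * z k + ∑ j : ↥(Finset.univ.erase k), M i ↑j * z ↑j := by
    intro z i
    have h1 : M.mulVec z i = ∑ j, M i j * z j := by simp [Matrix.mulVec, dotProduct]
    rw [h1, sumSplit k (fun j => M i j * z j)]
  have hBmv : ∀ (z : ↥(Finset.univ.erase k) → ℝ) (i : ↥(Finset.univ.erase k)),
      B.mulVec z i = ∑ j : ↥(Finset.univ.erase k), M ↑i ↑j * z j := by
    intro z i
    simp only [Matrix.mulVec, dotProduct]
    exact Finset.sum_congr rfl fun j _ => by rw [hB]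
  have hMv0 : ∀ i, i ≠ k → M.mulVec v i = 0 := by
    intro i hik
    have h1 : M.mulVec v i = M i k * v k + ∑ j : ↥(Finset.univ.erase k), M i ↑j * v ↑j := hmv v i
    have h2 : ∑ j : ↥(Finset.univ.erase k), M i ↑j * v ↑j = B.mulVec u ⟨i, hmemS i hik⟩ := by
      rw [hBmv]
      exact Finset.sum_congr rfl fun j _ => by rw [hvj]
    rw [h1, h2, hBu, hvk, hc_def]
    ring
  have hMvk : M.mulVec v k = s := by
    have h1 : M.mulVec v k = M k k * v k + ∑ j : ↥(Finset.univ.erase k), M k ↑j * v ↑j := hmv v k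
    rw [h1, hvk, hs, mul_one]
    congr 1
    exact Finset.sum_congr rfl fun j _ => by rw [hvj]
  have hMw : ∀ i, i ≠ k → 0 < M.mulVec w i := by
    intro i hik
    have h1 : M.mulVec w i = M i k * w k + ∑ j : ↥(Finset.univ.erase k), M i ↑j * w ↑j := hmv w i
    have h2 : ∑ j : ↥(Finset.univ.erase k), M i ↑j * w ↑j = B.mulVec x' ⟨i, hmemS i hik⟩ := by
      rw [hBmv]
      exact Finset.sum_congr rfl fun j _ => by rw [hwj]
    rw [h1, h2, hwk, mul_zero, zero_add]
    exact hBx' _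
  have hw_pos : ∀ j, j ≠ k → 0 < w j := by
    intro j hj
    rw [show j = ↑(⟨j, hmemS j hj⟩ : ↥(Finset.univ.erase k)) from rfl, hwj]
    exact hx' _
  refine ⟨?_, ?_, ?_⟩
  · -- s > 0 : M is semipositive
    intro hspos
    exact extendSemipos M k v w hvk hv0 hMv0 (hMvk ▸ hspos) hwk hw_pos hMw
  · -- s = 0 : det M = 0
    intro hs0
    apply Matrix.exists_mulVec_eq_zero_iff.mp
    refine ⟨v, ?_, ?_⟩
    · intro h
      have := congrFun h k
      rw [hvk] at this
      exact one_ne_zero this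
    · funext i
      by_cases hik : i = k
      · subst hik
        rw [Pi.zero_apply, hMvk, hs0]
      · rw [Pi.zero_apply, hMv0 i hik]
  · -- s < 0 : det M < 0, via the diagonal-shift homotopy
    intro hsneg
    set sg : m → ℝ := Pi.single k 1 with hsg
    set Mt : ℝ → Matrix m m ℝ := fun θ => M.updateRow k (M k + θ • sg) with hMt
    set Dd : ℝ := (M.updateRow k sg).det with hDd
    have hDet : ∀ θ, (Mt θ).det = M.det + θ * Dd := by
      intro θ
      rw [hMt]
      simp only
      rw [Matrix.det_updateRow_add, Matrix.det_updateRow_smul, Matrix.updateRow_eq_self]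
    -- rows other than k are unchanged
    have hrow_ne : ∀ θ (i : m), i ≠ k → ∀ z : m → ℝ, (Mt θ).mulVec z i = M.mulVec z i := by
      intro θ i hik z
      simp only [Matrix.mulVec, dotProduct]
      apply Finset.sum_congr rfl
      intro j _
      rw [hMt]
      simp only
      rw [Matrix.updateRow_apply, if_neg hik]
    have hrow_k : ∀ θ (z : m → ℝ), (Mt θ).mulVec z k = M.mulVec z k + θ * z k := by
      intro θ z
      simp only [Matrix.mulVec, dotProduct]
      have hterm : ∀ j, (Mt θ) k j * z j = M k j * z j + θ * (sg j * z j) := by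
        intro j
        rw [hMt]
        simp only
        rw [Matrix.updateRow_apply, if_pos rfl]
        simp only [Pi.add_apply, Pi.smul_apply, smul_eq_mul]
        ring
      rw [Finset.sum_congr rfl fun j _ => hterm j, Finset.sum_add_distrib, ← Finset.mul_sum]
      congr 2
      have hterm2 : ∀ j, sg j * z j = (Pi.single k (z k) : m → ℝ) j := by
        intro j
        rcases eq_or_ne j k with h | h
        · subst h; simp [hsg]
        · simp [hsg, Pi.single_apply, h]
      rw [Finset.sum_congr rfl fun j _ => hterm2 j]
      simp
    have hZt : ∀ θ (i j : m), i ≠ j → Mt θ i j ≤ 0 := by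
      intro θ i j hij
      rw [hMt]
      simp only
      rw [Matrix.updateRow_apply]
      by_cases hik : i = k
      · rw [if_pos hik]
        subst hik
        simp only [Pi.add_apply, Pi.smul_apply, smul_eq_mul, hsg]
        rw [Pi.single_apply, if_neg (fun h => hij h.symm)]
        simpa using hZ i j hij
      · rw [if_neg hik]
        exact hZ i j hij
    have hMtpos : ∀ θ, 0 < s + θ → 0 < (Mt θ).det := by
      intro θ hθ
      have hMv0' : ∀ i, i ≠ k → (Mt θ).mulVec v i = 0 := fun i hik => by
        rw [hrow_ne θ i hik]; exact hMv0 i hik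
      have hMvk' : (Mt θ).mulVec v k = s + θ := by
        rw [hrow_k, hMvk, hvk, mul_one]
      have hMw' : ∀ i, i ≠ k → 0 < (Mt θ).mulVec w i := fun i hik => by
        rw [hrow_ne θ i hik]; exact hMw i hik
      obtain ⟨x, hx1, hx2⟩ := extendSemipos (Mt θ) k v w hvk hv0 hMv0' (hMvk' ▸ hθ)
        hwk hw_pos hMw'
      exact detPos (Mt θ) (hZt θ) x hx1 hx2
    -- at θ = -s the matrix is singular
    have hsing : (Mt (-s)).det = 0 := by
      apply Matrix.exists_mulVec_eq_zero_iff.mp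
      refine ⟨v, ?_, ?_⟩
      · intro h
        have := congrFun h k
        rw [hvk] at this
        exact one_ne_zero this
      · funext i
        by_cases hik : i = k
        · subst hik
          rw [Pi.zero_apply, hrow_k, hMvk, hvk]
          ring
        · rw [Pi.zero_apply, hrow_ne _ _ hik, hMv0 i hik]
    have h1 : M.det + (-s) * Dd = 0 := by rw [← hDet]; exact hsing
    have h2 : 0 < M.det + (-s + 1) * Dd := by
      have := hMtpos (-s + 1) (by linarith)
      rwa [hDet] at this
    have hDdpos : 0 < Dd := by nlinarith
    have hMdet : M.det = s * Dd := by linarith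
    rw [hMdet]
    exact mul_neg_of_neg_of_pos hsneg hDdpos


end Aux

/-- A Z-matrix with all principal minors positive is semipositive. -/
lemma semiposOfPosMinors :
    ∀ (N : ℕ) (m : Type) [Fintype m] [DecidableEq m] (M : Matrix m m ℝ),
      Fintype.card m ≤ N → (∀ i j, i ≠ j → M i j ≤ 0) → PosMinors M →
      ∃ x : m → ℝ, (∀ i, 0 < x i) ∧ ∀ i, 0 < M.mulVec x i := by
  intro N
  induction N with
  | zero =>
    intro m _ _ M hcard hZ hPM
    have : IsEmpty m := Fintype.card_eq_zero_iff.mp (le_antisymm hcard (Nat.zero_le _))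
    exact ⟨fun _ => 1, fun i => isEmptyElim i, fun i => isEmptyElim i⟩
  | succ N ih =>
    intro m _ _ M hcard hZ hPM
    cases isEmpty_or_nonempty m with
    | inl h => exact ⟨fun _ => 1, fun i => isEmptyElim i, fun i => isEmptyElim i⟩
    | inr h =>
      obtain ⟨k⟩ := h
      -- the principal submatrix omitting k
      set B := M.submatrix (Subtype.val : ↥(Finset.univ.erase k) → m) Subtype.val with hBdef
      have hcard' : Fintype.card ↥(Finset.univ.erase k) ≤ N := by
        rw [Fintype.card_coe, Finset.card_erase_of_mem (Finset.mem_univ k), Finset.card_univ]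
        omega
      have hZB : ∀ i j : ↥(Finset.univ.erase k), i ≠ j → B i j ≤ 0 := by
        intro i j hij
        exact hZ ↑i ↑j (fun hh => hij (Subtype.ext hh))
      have hPMB : PosMinors B := posMinors_submatrix hPM Subtype.val Subtype.val_injective
      obtain ⟨x', hx', hBx'⟩ := ih ↥(Finset.univ.erase k) B hcard' hZB hPMB
      have hdetB : 0 < B.det := posMinors_det hPMB
      obtain ⟨u, hu0, hBu, hsign⟩ := coreLemma M hZ k B (fun i j => rfl) x' hx' hBx' hdetB.ne'
      have hdetM : 0 < M.det := posMinors_det hPM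
      obtain ⟨h1, h2, h3⟩ := hsign (M k k + ∑ j : ↥(Finset.univ.erase k), M k ↑j * u j) rfl
      rcases lt_trichotomy (M k k + ∑ j : ↥(Finset.univ.erase k), M k ↑j * u j) 0 with hlt | heq | hgt
      · exact absurd (h3 hlt) (by linarith)
      · exact absurd (h2 heq) (by linarith)
      · exact h1 hgt


/-- under the structure assumptions on `P`, the solution `α` of
`(I - P) α = -𝟙` has all entries positive. -/
theorem stmt0 (n : ℕ) (hn : 1 ≤ n) (P : Matrix (Fin n) (Fin n) ℝ)
    (hP : ∀ i j, 0 ≤ P i j)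
    (hirr : MatIrreducible (1 - P))
    (hdet : ((1 : Matrix (Fin n) (Fin n) ℝ) - P).det < 0)
    (hM : ∀ S : Finset (Fin n), S ≠ Finset.univ →
      IsNonsingularMMatrix
        (((1 : Matrix (Fin n) (Fin n) ℝ) - P).submatrix
          (fun i : S => (i : Fin n)) (fun j : S => (j : Fin n))))
    (α : Fin n → ℝ)
    (hα : ((1 : Matrix (Fin n) (Fin n) ℝ) - P).mulVec α = fun _ => -1) :
    ∀ i, 0 < α i := by
  set A : Matrix (Fin n) (Fin n) ℝ := 1 - P with hA
  have hZ : ∀ i j, i ≠ j → A i j ≤ 0 := by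
    intro i j hij
    rw [hA, Matrix.sub_apply, Matrix.one_apply_ne hij]
    simpa using hP i j
  intro k
  -- the principal submatrix omitting k
  have hSne : Finset.univ.erase k ≠ Finset.univ := by
    intro h
    have : k ∈ Finset.univ.erase k := by rw [h]; exact Finset.mem_univ k
    exact (Finset.mem_erase.mp this).1 rfl
  have hMS := hM (Finset.univ.erase k) hSne
  set B := A.submatrix
      (fun i : ↥(Finset.univ.erase k) => (i : Fin n))
      (fun j : ↥(Finset.univ.erase k) => (j : Fin n)) with hBdef
  have hZB : ∀ i j : ↥(Finset.univ.erase k), i ≠ j → B i j ≤ 0 := hMS.1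
  have hPMB : PosMinors B := posMinors_of_MMatrix hMS
  obtain ⟨x', hx', hBx'⟩ := semiposOfPosMinors (Fintype.card ↥(Finset.univ.erase k))
    ↥(Finset.univ.erase k) B le_rfl hZB hPMB
  have hdetB : 0 < B.det := detPos B hZB x' hx' hBx'
  obtain ⟨u, hu0, hBu, hsign⟩ := coreLemma A hZ k B (fun i j => rfl) x' hx' hBx' hdetB.ne'
  set s : ℝ := A k k + ∑ j : ↥(Finset.univ.erase k), A k ↑j * u j with hs_def
  obtain ⟨h1, h2, h3⟩ := hsign s hs_def
  have hdetA : A.det < 0 := hdet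
  have hsneg : s < 0 := by
    rcases lt_trichotomy s 0 with hlt | heq | hgt
    · exact hlt
    · exact absurd (h2 heq) (by linarith)
    · obtain ⟨x, hx1, hx2⟩ := h1 hgt
      exact absurd (detPos A hZ x hx1 hx2) (by linarith)
  have hne : ∀ j : ↥(Finset.univ.erase k), (↑j : Fin n) ≠ k := fun j => (Finset.mem_erase.mp j.2).1
  -- row sums
  have hmv : ∀ i : Fin n, A i k * α k + ∑ j : ↥(Finset.univ.erase k), A i ↑j * α ↑j = -1 := by
    intro i
    have h0 : A.mulVec α i = -1 := congrFun hα i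
    have h1 : A.mulVec α i = ∑ j, A i j * α j := by simp [Matrix.mulVec, dotProduct]
    rw [h1, sumSplit k (fun j => A i j * α j)] at h0
    exact h0
  have hBmv : ∀ (z : ↥(Finset.univ.erase k) → ℝ) (j : ↥(Finset.univ.erase k)),
      B.mulVec z j = ∑ t : ↥(Finset.univ.erase k), A ↑j ↑t * z t := by
    intro z j
    simp [Matrix.mulVec, dotProduct, hBdef]
  -- the auxiliary nonnegative vector r
  set r : ↥(Finset.univ.erase k) → ℝ := fun j => α k * u j - α ↑j with hr_def
  have hBr : B.mulVec r = fun _ => (1:ℝ) := by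
    funext j
    have hBuj : ∑ t : ↥(Finset.univ.erase k), A ↑j ↑t * u t = -A ↑j k := by
      rw [← hBmv u j, hBu]
    have hαj : ∑ t : ↥(Finset.univ.erase k), A ↑j ↑t * α ↑t = -1 - A ↑j k * α k := by
      have := hmv ↑j
      linarith
    rw [hBmv r j]
    have : ∀ t : ↥(Finset.univ.erase k), A ↑j ↑t * r t
        = α k * (A ↑j ↑t * u t) - A ↑j ↑t * α ↑t := by
      intro t; rw [hr_def]; ring
    rw [Finset.sum_congr rfl fun t _ => this t, Finset.sum_sub_distrib, ← Finset.mul_sum,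
      hBuj, hαj]
    ring
  have hr0 : ∀ j, 0 ≤ r j :=
    compNonneg B hZB x' hx' hBx' r (fun _ => 1) hBr (fun _ => zero_le_one)
  -- row k
  have hrowk : A k k * α k + ∑ j : ↥(Finset.univ.erase k), A k ↑j * α ↑j = -1 := hmv k
  have hαk_eq : ∀ j : ↥(Finset.univ.erase k), α ↑j = α k * u j - r j := by
    intro j; rw [hr_def]; ring
  have hkey : α k * s = -1 + ∑ j : ↥(Finset.univ.erase k), A k ↑j * r j := by
    have hsplit : ∀ j : ↥(Finset.univ.erase k),
        A k ↑j * α ↑j = α k * (A k ↑j * u j) - A k ↑j * r j := by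
      intro j; rw [hαk_eq j]; ring
    rw [Finset.sum_congr rfl fun j _ => hsplit j, Finset.sum_sub_distrib, ← Finset.mul_sum]
      at hrowk
    rw [hs_def]
    ring_nf
    ring_nf at hrowk
    linarith
  have hterm : ∑ j : ↥(Finset.univ.erase k), A k ↑j * r j ≤ 0 := by
    apply Finset.sum_nonpos
    intro j _
    exact mul_nonpos_of_nonpos_of_nonneg (hZ k ↑j (fun h => hne j h.symm)) (hr0 j)
  have hfinal : α k * s ≤ -1 := by linarith
  by_contra hcon
  push_neg at hcon
  nlinarith
end

section
/- Let $P=(p_{ij})$ be an $n\times n$ matrix with nonnegative entries such that every cofactor $A_{i1}$ of $I-P$ (the algebraic minor of rank $n-1$ at position $(i,1)$) is positive. If $\sum_{j=1}^n p_{1j}\le \sum_{j=1}^n p_{ij}$ for all $i$, then $-\det(I-P)\ge (\sum_{j=1}^n p_{1j}-1)\Lambda^1$, where $\Lambda^1$ is the determinant of the matrix obtained from $I-P$ by replacing its first column with the all-ones vector. Equality holds if and only if all row sums $\sum_{j=1}^n p_{ij}$ are equal. -/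
/-- The cofactor `A_{i1}` of a square matrix `M` (with zero-based indexing:
`(-1)^i` times the determinant of `M` with row `i` and column `0` deleted). -/
noncomputable def cofCol0 {n : ℕ} (M : Matrix (Fin (n + 1)) (Fin (n + 1)) ℝ)
    (i : Fin (n + 1)) : ℝ :=
  (-1 : ℝ) ^ (i : ℕ) * (M.submatrix i.succAbove (Fin.succAbove 0)).det

lemma expand_col0 {n : ℕ} (M : Matrix (Fin (n + 1)) (Fin (n + 1)) ℝ)
    (c : Fin (n + 1) → ℝ) :
    (M.updateCol 0 c).det = ∑ i, c i * cofCol0 M i := by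
  rw [Matrix.det_succ_column_zero]
  refine Finset.sum_congr rfl fun i _ => ?_
  have h1 : (M.updateCol 0 c) i 0 = c i := Matrix.updateCol_self
  have h2 : (M.updateCol 0 c).submatrix i.succAbove Fin.succ =
      M.submatrix i.succAbove Fin.succ := by
    ext k l
    simp [Matrix.submatrix, Matrix.updateCol_ne (Fin.succ_ne_zero l)]
  rw [h1, h2]
  unfold cofCol0
  rw [Fin.succAbove_zero]
  ring

lemma det_eq_cof {n : ℕ} (M : Matrix (Fin (n + 1)) (Fin (n + 1)) ℝ) :
    M.det = ∑ i, M i 0 * cofCol0 M i := by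
  conv_lhs => rw [← Matrix.updateCol_eq_self M 0]
  exact expand_col0 M _

lemma det_eq_rowsum_cof {n : ℕ} (M : Matrix (Fin (n + 1)) (Fin (n + 1)) ℝ) :
    M.det = ∑ i, (∑ j, M i j) * cofCol0 M i := by
  have : ∑ i, (∑ j, M i j) * cofCol0 M i
      = ∑ j, ∑ i, M i j * cofCol0 M i := by
    rw [Finset.sum_comm]
    exact Finset.sum_congr rfl fun i _ => by rw [Finset.sum_mul]
  rw [this]
  have hz : ∀ j : Fin (n + 1), j ≠ 0 → ∑ i, M i j * cofCol0 M i = 0 := fun j hj => by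
    rw [← expand_col0 M (fun i => M i j)]
    exact Matrix.det_updateCol_eq_zero hj
  rw [Finset.sum_eq_single 0 (fun j _ hj => hz j hj) (by simp)]
  exact det_eq_cof M


/-- if all cofactors of `I - P` along the first column are positive
and the first row sum of `P` is minimal, then
`(∑_j p_{1j} - 1) Λ¹ ≤ -det(I-P)`, with equality iff all row sums are equal.
Here `Λ¹` is the determinant of `I - P` with its first column replaced by the
all-ones vector. -/
theorem stmt2 (n : ℕ) (P : Matrix (Fin (n + 1)) (Fin (n + 1)) ℝ)
    (hP : ∀ i j, 0 ≤ P i j)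
    (hcof : ∀ i, 0 < cofCol0 ((1 : Matrix (Fin (n + 1)) (Fin (n + 1)) ℝ) - P) i)
    (hmin : ∀ i, ∑ j, P 0 j ≤ ∑ j, P i j) :
    (∑ j, P 0 j - 1) *
        (((1 : Matrix (Fin (n + 1)) (Fin (n + 1)) ℝ) - P).updateCol 0
          (fun _ => 1)).det ≤
      -((1 : Matrix (Fin (n + 1)) (Fin (n + 1)) ℝ) - P).det ∧
    ((∑ j, P 0 j - 1) *
        (((1 : Matrix (Fin (n + 1)) (Fin (n + 1)) ℝ) - P).updateCol 0
          (fun _ => 1)).det =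
      -((1 : Matrix (Fin (n + 1)) (Fin (n + 1)) ℝ) - P).det ↔
      ∀ i i', ∑ j, P i j = ∑ j, P i' j) := by
  set M := (1 : Matrix (Fin (n + 1)) (Fin (n + 1)) ℝ) - P with hM
  set s : Fin (n + 1) → ℝ := fun i => ∑ j, P i j with hs
  have hrow : ∀ i, ∑ j, M i j = 1 - s i := by
    intro i
    simp [hM, hs, Matrix.sub_apply, Finset.sum_sub_distrib, Matrix.one_apply]
  have hdet : -M.det = ∑ i, (s i - 1) * cofCol0 M i := by
    rw [det_eq_rowsum_cof M, ← Finset.sum_neg_distrib]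
    exact Finset.sum_congr rfl fun i _ => by rw [hrow i]; ring
  have hΛ : (M.updateCol 0 (fun _ => 1)).det = ∑ i, cofCol0 M i := by
    rw [expand_col0]; simp
  have hlhs : (s 0 - 1) * (M.updateCol 0 (fun _ => 1)).det
      = ∑ i, (s 0 - 1) * cofCol0 M i := by
    rw [hΛ, Finset.mul_sum]
  have hle : ∀ i : Fin (n + 1), i ∈ Finset.univ →
      (s 0 - 1) * cofCol0 M i ≤ (s i - 1) * cofCol0 M i := fun i _ =>
    mul_le_mul_of_nonneg_right (by linarith [hmin i]) (hcof i).le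
  constructor
  · rw [hlhs, hdet]
    exact Finset.sum_le_sum hle
  · rw [hlhs, hdet]
    rw [Finset.sum_eq_sum_iff_of_le hle]
    constructor
    · intro h i i'
      have h1 : s i = s 0 := by
        have := h i (Finset.mem_univ i)
        have hne := (hcof i).ne'
        have := mul_right_cancel₀ hne this
        linarith
      have h2 : s i' = s 0 := by
        have := h i' (Finset.mem_univ i')
        have hne := (hcof i').ne'
        have := mul_right_cancel₀ hne this
        linarith
      simpa [hs] using h1.trans h2.symm
    · intro h i _
      have : s 0 = s i := h 0 i
      rw [this]
end

section
/- Let $P=(p_{ij})$ be an $n\times n$ matrix with nonnegative entries, $\det(I-P)<0$, all cofactors of $I-P$ along the first column positive, and $\Lambda^j>0$ for all $j$, where $\Lambda^j$ is the determinant of $I-P$ with its $j$-th column replaced by the all-ones vector. Suppose the first row sum $\sum_{j=1}^n p_{1j}$ is minimal among all row sums and some other row has strictly larger row sum. Then $\Lambda^1$ is not the maximum of $\{\Lambda^1,\dots,\Lambda^n\}$. -/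
/-- `Λ^j`: the determinant of `M` with column `j` replaced by the all-ones vector. -/
noncomputable def Lam {n : ℕ} (M : Matrix (Fin (n + 1)) (Fin (n + 1)) ℝ)
    (j : Fin (n + 1)) : ℝ :=
  (M.updateCol j fun _ => 1).det

/-- The cofactor equals the determinant of the matrix with row `i` replaced by `e₀`. -/
lemma cofCol0_eq_det_updateRow {n : ℕ} (M : Matrix (Fin (n + 1)) (Fin (n + 1)) ℝ)
    (i : Fin (n + 1)) :
    cofCol0 M i = (M.updateRow i (Pi.single 0 1)).det := by
  rw [Matrix.det_succ_row _ i]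
  rw [Finset.sum_eq_single (0 : Fin (n + 1))]
  · have hsub : (M.updateRow i (Pi.single 0 1)).submatrix i.succAbove
        (Fin.succAbove 0) = M.submatrix i.succAbove (Fin.succAbove 0) := by
      ext a b
      simp [Matrix.submatrix_apply, Matrix.updateRow_ne (Fin.succAbove_ne i a)]
    simp [cofCol0, hsub, Matrix.updateRow_self]
  · intro j _ hj
    simp [Matrix.updateRow_self, Pi.single_apply, hj.symm]
  · simp

/-- if the first row sum of `P` is minimal and some other row sum is
strictly larger, then `Λ¹` is not the maximum of the `Λ^j`. -/
theorem stmt3 (n : ℕ) (P : Matrix (Fin (n + 1)) (Fin (n + 1)) ℝ)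
    (hP : ∀ i j, 0 ≤ P i j)
    (hdet : ((1 : Matrix (Fin (n + 1)) (Fin (n + 1)) ℝ) - P).det < 0)
    (hcof : ∀ i, 0 < cofCol0 ((1 : Matrix (Fin (n + 1)) (Fin (n + 1)) ℝ) - P) i)
    (hLam : ∀ j, 0 < Lam ((1 : Matrix (Fin (n + 1)) (Fin (n + 1)) ℝ) - P) j)
    (hmin : ∀ i, ∑ j, P 0 j ≤ ∑ j, P i j)
    (hstrict : ∃ i, ∑ j, P 0 j < ∑ j, P i j) :
    ∃ j, Lam ((1 : Matrix (Fin (n + 1)) (Fin (n + 1)) ℝ) - P) 0 <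
      Lam ((1 : Matrix (Fin (n + 1)) (Fin (n + 1)) ℝ) - P) j := by
  by_contra hcon
  push_neg at hcon
  set A : Matrix (Fin (n + 1)) (Fin (n + 1)) ℝ := 1 - P with hA
  set L : Fin (n + 1) → ℝ := Lam A with hL
  set c : Fin (n + 1) → ℝ := cofCol0 A with hc
  set d : Fin (n + 1) → ℝ := fun j => L 0 - L j with hd
  have hd0 : d 0 = 0 := by simp [hd]
  have hdnn : ∀ j, 0 ≤ d j := fun j => sub_nonneg.mpr (hcon j)
  -- L is the Cramer vector for b = 1
  have hLc : L = Matrix.cramer A (fun _ => 1) := by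
    funext j; rw [Matrix.cramer_apply]; rfl
  have hAL : ∀ i, ∑ j, A i j * L j = A.det := by
    intro i
    have := congrFun (Matrix.mulVec_cramer A (fun _ => (1:ℝ))) i
    rw [← hLc] at this
    simpa [Matrix.mulVec, dotProduct] using this
  -- c is the Cramer vector for Aᵀ with b = e₀
  have hcC : c = Matrix.cramer A.transpose (Pi.single 0 1) := by
    funext i
    rw [Matrix.cramer_apply, Matrix.updateCol_transpose, Matrix.det_transpose]
    exact cofCol0_eq_det_updateRow A i
  have hcA : ∀ j, ∑ i, c i * A i j = if j = 0 then A.det else 0 := by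
    intro j
    have := congrFun (Matrix.mulVec_cramer A.transpose (Pi.single 0 (1:ℝ))) j
    rw [← hcC] at this
    simp only [Matrix.mulVec, dotProduct, Matrix.transpose_apply,
      Matrix.det_transpose, Pi.smul_apply, smul_eq_mul] at this
    rw [show ∑ i, c i * A i j = ∑ i, A i j * c i from Finset.sum_congr rfl
      (fun i _ => mul_comm _ _), this, Pi.single_apply]
    by_cases h : j = 0 <;> simp [h]
  -- row sums
  have hrow : ∀ i, ∑ j, A i j = 1 - ∑ j, P i j := by
    intro i
    simp [hA, Matrix.sub_apply, Finset.sum_sub_distrib, Matrix.one_apply]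
  -- T i := ∑ j, A i j * d j
  have hT : ∀ i, ∑ j, A i j * d j = L 0 * (1 - ∑ j, P i j) - A.det := by
    intro i
    have : ∑ j, A i j * d j = (∑ j, A i j) * L 0 - ∑ j, A i j * L j := by
      rw [Finset.sum_mul, ← Finset.sum_sub_distrib]
      exact Finset.sum_congr rfl fun j _ => by simp only [hd]; ring
    rw [this, hAL i, hrow i, mul_comm]
  -- T 0 ≤ 0
  have hT0 : ∑ j, A 0 j * d j ≤ 0 := by
    apply Finset.sum_nonpos
    intro j _
    by_cases h : j = 0
    · simp [h, hd0]
    · have hAneg : A 0 j ≤ 0 := by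
        simp [hA, Matrix.sub_apply, Matrix.one_apply, Ne.symm h, hP 0 j]
      exact mul_nonpos_of_nonpos_of_nonneg hAneg (hdnn j)
  have hL0pos : 0 < L 0 := hLam 0
  -- each T i ≤ 0, with strictness for the witness
  have hTle : ∀ i, ∑ j, A i j * d j ≤ 0 := by
    intro i
    rw [hT i]
    calc L 0 * (1 - ∑ j, P i j) - A.det
        ≤ L 0 * (1 - ∑ j, P 0 j) - A.det := by
          have := hmin i
          nlinarith
      _ = ∑ j, A 0 j * d j := (hT 0).symm
      _ ≤ 0 := hT0
  obtain ⟨i₀, hi₀⟩ := hstrict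
  have hTlt : ∑ j, A i₀ j * d j < 0 := by
    rw [hT i₀]
    calc L 0 * (1 - ∑ j, P i₀ j) - A.det
        < L 0 * (1 - ∑ j, P 0 j) - A.det := by nlinarith
      _ = ∑ j, A 0 j * d j := (hT 0).symm
      _ ≤ 0 := hT0
  -- the weighted sum equals det A * d 0 = 0
  have hkey : ∑ i, c i * ∑ j, A i j * d j = 0 := by
    have : ∑ i, c i * ∑ j, A i j * d j = ∑ j, (∑ i, c i * A i j) * d j := by
      simp_rw [Finset.mul_sum, Finset.sum_mul]
      rw [Finset.sum_comm]
      exact Finset.sum_congr rfl fun j _ => Finset.sum_congr rfl fun i _ => by ring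
    rw [this]
    rw [Finset.sum_congr rfl fun j (_ : j ∈ Finset.univ) => by rw [hcA j]]
    simp [hd0]
  -- contradiction: the sum is strictly negative
  have hlt : ∑ i, c i * ∑ j, A i j * d j < 0 := by
    have : ∑ i, c i * ∑ j, A i j * d j < ∑ i : Fin (n+1), (0:ℝ) := by
      apply Finset.sum_lt_sum
      · intro i _
        exact mul_nonpos_of_nonneg_of_nonpos (hcof i).le (hTle i)
      · exact ⟨i₀, Finset.mem_univ _, mul_neg_of_pos_of_neg (hcof i₀) hTlt⟩
    simpa using this
  exact absurd hkey (ne_of_lt hlt)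
end

section
/- Let $P=(p_{ij})$ be an $n\times n$ matrix with nonnegative entries and $\det(I-P)<0$, and suppose all cofactors $A_{ij}$ of $I-P$ are positive. Let $p_c>1$ and suppose $\max_j \alpha_j > 1/(p_c-1)$ where $(I-P)\alpha=-\mathbf 1$. If the first row sum $\sum_{j=1}^n p_{1j}$ is minimal among all row sums, then $\sum_{j=1}^n p_{1j} < p_c$. -/
/-- The cofactor `A_{ij}` of a square matrix `M` (zero-based indexing:
`(-1)^(i+j)` times the determinant of `M` with row `i` and column `j` deleted). -/
noncomputable def cofactor {n : ℕ} (M : Matrix (Fin (n + 1)) (Fin (n + 1)) ℝ)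
    (i j : Fin (n + 1)) : ℝ :=
  (-1 : ℝ) ^ ((i : ℕ) + (j : ℕ)) * (M.submatrix i.succAbove j.succAbove).det

lemma adjugate_eq_cofactor {n : ℕ} (M : Matrix (Fin (n + 1)) (Fin (n + 1)) ℝ)
    (i j : Fin (n + 1)) : M.adjugate j i = cofactor M i j := by
  rw [Matrix.adjugate_fin_succ_eq_det_submatrix, cofactor]

/-- under positivity of all cofactors of `I - P`, negativity of
`det(I - P)` and `max_j α_j > 1/(p_c - 1)`, a minimal row sum of `P` is
strictly below the critical exponent `p_c`. -/
theorem stmt4 (n : ℕ) (P : Matrix (Fin (n + 1)) (Fin (n + 1)) ℝ)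
    (hP : ∀ i j, 0 ≤ P i j)
    (hdet : ((1 : Matrix (Fin (n + 1)) (Fin (n + 1)) ℝ) - P).det < 0)
    (hcof : ∀ i j, 0 < cofactor ((1 : Matrix (Fin (n + 1)) (Fin (n + 1)) ℝ) - P) i j)
    (pc : ℝ) (hpc : 1 < pc)
    (α : Fin (n + 1) → ℝ)
    (hα : ((1 : Matrix (Fin (n + 1)) (Fin (n + 1)) ℝ) - P).mulVec α = fun _ => -1)
    (hmax : ∃ j, 1 / (pc - 1) < α j)
    (hmin : ∀ i, ∑ j, P 0 j ≤ ∑ j, P i j) :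
    ∑ j, P 0 j < pc := by
  set M : Matrix (Fin (n + 1)) (Fin (n + 1)) ℝ := 1 - P with hM
  set s : ℝ := ∑ j, P 0 j with hs
  obtain ⟨j, hj⟩ := hmax
  -- Column sum of cofactors
  set C : ℝ := ∑ k, cofactor M k j with hC
  have hCpos : 0 < C := Finset.sum_pos (fun k _ => hcof k j) ⟨j, Finset.mem_univ j⟩
  -- Fact 1: det M * α j = -C
  have fact1 : M.det * α j = -C := by
    have h1 : M.adjugate.mulVec (M.mulVec α) = M.det • α := by
      rw [Matrix.mulVec_mulVec, Matrix.adjugate_mul, Matrix.smul_mulVec,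
        Matrix.one_mulVec]
    rw [hα] at h1
    have h2 := congrFun h1 j
    simp only [Matrix.mulVec, dotProduct, Pi.smul_apply, smul_eq_mul] at h2
    rw [← h2]
    simp [adjugate_eq_cofactor, hC, Finset.sum_neg_distrib]
  -- Fact 2: ∑ k, cofactor M k j * (∑ j', M k j') = det M
  have fact2 : ∑ k, cofactor M k j * (∑ j', M k j') = M.det := by
    have h1 : ∀ j', (M.adjugate * M) j j' = (M.det • (1 : Matrix (Fin (n+1)) (Fin (n+1)) ℝ)) j j' := by
      intro j'; rw [Matrix.adjugate_mul]
    have h2 : ∑ j', (M.adjugate * M) j j' = M.det := by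
      rw [Finset.sum_congr rfl fun j' _ => (h1 j').trans
        (show _ = M.det * (1 : Matrix (Fin (n+1)) (Fin (n+1)) ℝ) j j' from rfl)]
      simp [Matrix.smul_apply, Matrix.one_apply, Finset.sum_ite_eq']
    rw [← h2]
    simp only [Matrix.mul_apply]
    rw [Finset.sum_comm]
    exact Finset.sum_congr rfl fun k _ => by
      rw [Finset.mul_sum]
      exact Finset.sum_congr rfl fun j' _ => by rw [adjugate_eq_cofactor]
  -- Row sums of M: ∑ j', M k j' = 1 - ∑ j', P k j'
  have hrow : ∀ k, ∑ j', M k j' = 1 - ∑ j', P k j' := by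
    intro k
    simp [hM, Matrix.sub_apply, Matrix.one_apply, Finset.sum_sub_distrib,
      Finset.sum_ite_eq']
  -- det M ≤ (1 - s) * C
  have key : M.det ≤ (1 - s) * C := by
    rw [← fact2, hC, Finset.mul_sum]
    apply Finset.sum_le_sum
    intro k _
    rw [hrow k, mul_comm ((1:ℝ) - s)]
    apply mul_le_mul_of_nonneg_left _ (le_of_lt (hcof k j))
    have := hmin k
    linarith
  by_contra hcon
  push_neg at hcon
  have hs1 : 0 < s - 1 := by linarith
  -- (s - 1) * α j ≤ 1
  have hαj : α j ≤ 1 / (s - 1) := by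
    have hdetne : M.det ≠ 0 := ne_of_lt hdet
    have : α j = C / (-M.det) := by
      rw [eq_div_iff (by linarith : (-M.det) ≠ 0)]
      linarith [fact1]
    rw [this, div_le_div_iff₀ (by linarith) hs1]
    nlinarith [key]
  have h1 : 1 / (s - 1) ≤ 1 / (pc - 1) :=
    one_div_le_one_div_of_le (by linarith) (by linarith)
  linarith
end

section
/- Let $d\ge 3$, let $B_1\subset\mathbb{R}^d$ be the open unit ball, and let $P=(p_{ij})$ be an $n\times n$ nonnegative matrix with $(I-P)\alpha=-\mathbf 1$ having solution $\alpha$ with $0<\alpha_i<(d-2)/2$ for all $i$. Define $c_i>0$ by $\prod_{j=1}^n c_j^{p_{ij}}=2c_i\alpha_i(d-2-2\alpha_i)$, and set $u_i(x)=c_i(|x|^{-2\alpha_i}-1)$. Then for each $i$ and each $x\in B_1\setminus\{0\}$, $-\Delta u_i(x)=\prod_{j=1}^n (u_j(x)+c_j)^{p_{ij}}$. -/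
open Metric

/-- The Laplacian of a function on `ℝ^d`: sum of second partial derivatives. -/
noncomputable def lap {d : ℕ} (f : EuclideanSpace ℝ (Fin d) → ℝ)
    (x : EuclideanSpace ℝ (Fin d)) : ℝ :=
  ∑ i, fderiv ℝ (fun y => fderiv ℝ f y (EuclideanSpace.single i 1)) x
    (EuclideanSpace.single i 1)

lemma myHasFDerivAt_norm_rpow {d : ℕ} (β : ℝ) {x : EuclideanSpace ℝ (Fin d)} (hx : x ≠ 0) :
    HasFDerivAt (fun y : EuclideanSpace ℝ (Fin d) => ‖y‖ ^ β)
      ((β * ‖x‖ ^ (β - 2)) • (innerSL ℝ x)) x := by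
  have hnx : (0:ℝ) < ‖x‖ := norm_pos_iff.mpr hx
  have hx2 : (0:ℝ) < ‖x‖ ^ 2 := by positivity
  have h1 : HasFDerivAt (fun y : EuclideanSpace ℝ (Fin d) => ‖y‖ ^ 2)
      (2 • innerSL ℝ x) x := (hasStrictFDerivAt_norm_sq x).hasFDerivAt
  have h2 : HasDerivAt (fun t : ℝ => t ^ (β/2)) ((β/2) * (‖x‖^2) ^ (β/2 - 1)) (‖x‖^2) :=
    Real.hasDerivAt_rpow_const (Or.inl hx2.ne')
  have h3 := h2.comp_hasFDerivAt x h1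
  have hfun : (fun y : EuclideanSpace ℝ (Fin d) => (‖y‖^2) ^ (β/2))
      = fun y => ‖y‖ ^ β := by
    funext y
    rw [← Real.rpow_natCast ‖y‖ 2, ← Real.rpow_mul (norm_nonneg y)]
    congr 1
    push_cast
    ring
  rw [Function.comp_def, hfun] at h3
  refine h3.congr_fderiv ?_
  ext v
  have : (‖x‖^2 : ℝ) ^ (β/2 - 1) = ‖x‖ ^ (β - 2) := by
    rw [← Real.rpow_natCast ‖x‖ 2, ← Real.rpow_mul (norm_nonneg x)]
    congr 1
    push_cast
    ring
  simp [this]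
  ring

lemma hasFDerivAt_radial {d : ℕ} (β cc : ℝ) {y : EuclideanSpace ℝ (Fin d)} (hy : y ≠ 0) :
    HasFDerivAt (fun z : EuclideanSpace ℝ (Fin d) => cc * (‖z‖ ^ β - 1))
      (cc • ((β * ‖y‖ ^ (β - 2)) • innerSL ℝ y)) y :=
  (((myHasFDerivAt_norm_rpow β hy).sub_const 1).const_mul cc)

lemma fderiv_radial {d : ℕ} (β cc : ℝ) {y : EuclideanSpace ℝ (Fin d)} (hy : y ≠ 0)
    (i : Fin d) :
    fderiv ℝ (fun z : EuclideanSpace ℝ (Fin d) => cc * (‖z‖ ^ β - 1)) y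
      (EuclideanSpace.single i 1) = cc * β * ‖y‖ ^ (β - 2) * y i := by
  rw [(hasFDerivAt_radial β cc hy).fderiv]
  have : (inner ℝ y (EuclideanSpace.single i (1:ℝ)) : ℝ) = y i := by
    rw [EuclideanSpace.inner_single_right]; simp
  simp [this]
  ring

lemma lap_radial {d : ℕ} (β cc : ℝ) {x : EuclideanSpace ℝ (Fin d)} (hx : x ≠ 0) :
    lap (fun y : EuclideanSpace ℝ (Fin d) => cc * (‖y‖ ^ β - 1)) x
      = cc * β * (β + (d:ℝ) - 2) * ‖x‖ ^ (β - 2) := by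
  have hnx : (0:ℝ) < ‖x‖ := norm_pos_iff.mpr hx
  have key : ∀ i : Fin d,
      fderiv ℝ (fun y => fderiv ℝ (fun z : EuclideanSpace ℝ (Fin d) => cc * (‖z‖ ^ β - 1)) y
          (EuclideanSpace.single i 1)) x (EuclideanSpace.single i 1)
        = cc * β * ‖x‖ ^ (β - 2) + (cc * β * (β - 2) * ‖x‖ ^ (β - 4)) * (x i) ^ 2 := by
    intro i
    have hEq : (fun y => fderiv ℝ (fun z : EuclideanSpace ℝ (Fin d) => cc * (‖z‖ ^ β - 1)) y
          (EuclideanSpace.single i 1))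
        =ᶠ[nhds x] (fun y => (cc * β) * (‖y‖ ^ (β - 2) * y i)) := by
      filter_upwards [IsOpen.mem_nhds isOpen_compl_singleton hx] with y hy
      rw [fderiv_radial β cc hy i]
      ring
    rw [hEq.fderiv_eq]
    -- derivative of product
    have h1 : HasFDerivAt (fun y : EuclideanSpace ℝ (Fin d) => ‖y‖ ^ (β - 2))
        (((β - 2) * ‖x‖ ^ (β - 2 - 2)) • innerSL ℝ x) x := myHasFDerivAt_norm_rpow _ hx
    have h2 : HasFDerivAt (fun y : EuclideanSpace ℝ (Fin d) => y i)
        ((PiLp.proj 2 (fun _ : Fin d => ℝ) i : EuclideanSpace ℝ (Fin d) →L[ℝ] ℝ)) x := by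
      exact (PiLp.proj 2 (fun _ : Fin d => ℝ) i : EuclideanSpace ℝ (Fin d) →L[ℝ] ℝ).hasFDerivAt
    have h3 := ((h1.mul h2).const_mul (cc * β)).fderiv
    simp only [Pi.mul_apply] at h3
    rw [h3]
    have hip : (inner ℝ x (EuclideanSpace.single i (1:ℝ)) : ℝ) = x i := by
      rw [EuclideanSpace.inner_single_right]; simp
    have hproj : (PiLp.proj 2 (fun _ : Fin d => ℝ) i : EuclideanSpace ℝ (Fin d) →L[ℝ] ℝ)
        (EuclideanSpace.single i 1) = 1 := by
      simp [EuclideanSpace.single_apply]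
    simp [hip, hproj]
    rw [show β - 2 - 2 = β - 4 by ring]
    ring
  have hsum : ∑ i, x i ^ 2 = ‖x‖ ^ 2 := by
    rw [EuclideanSpace.norm_eq, Real.sq_sqrt (by positivity)]
    simp [sq_abs]
  have hpow : ‖x‖ ^ (β - 4) * ‖x‖ ^ 2 = ‖x‖ ^ (β - 2) := by
    rw [← Real.rpow_natCast ‖x‖ 2, ← Real.rpow_add hnx]
    congr 1
    push_cast
    ring
  unfold lap
  rw [Finset.sum_congr rfl (fun i _ => key i), Finset.sum_add_distrib, Finset.sum_const,
    Finset.card_univ, Fintype.card_fin, ← Finset.mul_sum, hsum, nsmul_eq_mul]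
  rw [mul_assoc (cc * β * (β - 2)), hpow]
  ring

/-- the explicit singular radial functions
`u_i(x) = c_i(|x|^{-2α_i} - 1)` solve `-Δu_i = ∏_j (u_j + c_j)^{p_{ij}}` in the
punctured unit ball. -/
theorem stmt5 (d n : ℕ) (hd : 3 ≤ d) (P : Matrix (Fin n) (Fin n) ℝ)
    (hP : ∀ i j, 0 ≤ P i j)
    (α : Fin n → ℝ)
    (hα : ((1 : Matrix (Fin n) (Fin n) ℝ) - P).mulVec α = fun _ => -1)
    (hαpos : ∀ i, 0 < α i) (hαlt : ∀ i, α i < ((d : ℝ) - 2) / 2)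
    (c : Fin n → ℝ) (hc : ∀ i, 0 < c i)
    (hceq : ∀ i, ∏ j, c j ^ (P i j) = 2 * c i * α i * ((d : ℝ) - 2 - 2 * α i))
    (u : Fin n → EuclideanSpace ℝ (Fin d) → ℝ)
    (hu : ∀ i x, u i x = c i * (‖x‖ ^ (-(2 * α i)) - 1)) :
    ∀ i, ∀ x ∈ ball (0 : EuclideanSpace ℝ (Fin d)) 1, x ≠ 0 →
      -lap (u i) x = ∏ j, (u j x + c j) ^ (P i j) := by
  intro i x _ hx0
  have hnx : (0:ℝ) < ‖x‖ := norm_pos_iff.mpr hx0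
  have hui : u i = fun y => c i * (‖y‖ ^ (-(2 * α i)) - 1) := funext (hu i)
  rw [hui, lap_radial _ _ hx0]
  have hsum : ∑ j, P i j * α j = α i + 1 := by
    have h := congrFun hα i
    rw [Matrix.sub_mulVec, Matrix.one_mulVec, Pi.sub_apply] at h
    have h2 : P.mulVec α i = ∑ j, P i j * α j := by
      simp [Matrix.mulVec, dotProduct]
    rw [h2] at h
    linarith
  have h1 : ∀ j, u j x + c j = c j * ‖x‖ ^ (-(2 * α j)) := by
    intro j; rw [hu]; ring
  have hRHS : ∏ j, (u j x + c j) ^ (P i j)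
      = (∏ j, c j ^ (P i j)) * ‖x‖ ^ (-(2 * (α i + 1))) := by
    calc ∏ j, (u j x + c j) ^ P i j
        = ∏ j, (c j ^ P i j * ‖x‖ ^ (-(2*α j) * P i j)) := by
          refine Finset.prod_congr rfl fun j _ => ?_
          rw [h1 j, Real.mul_rpow (hc j).le (Real.rpow_nonneg hnx.le _),
            ← Real.rpow_mul hnx.le]
      _ = (∏ j, c j ^ P i j) * ∏ j, ‖x‖ ^ (-(2*α j) * P i j) := Finset.prod_mul_distrib
      _ = (∏ j, c j ^ P i j) * ‖x‖ ^ (∑ j, -(2*α j) * P i j) := by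
          rw [Real.rpow_sum_of_pos hnx]
      _ = (∏ j, c j ^ P i j) * ‖x‖ ^ (-(2 * (α i + 1))) := by
          congr 1
          have : ∑ j, -(2*α j) * P i j = -2 * ∑ j, P i j * α j := by
            rw [Finset.mul_sum]
            exact Finset.sum_congr rfl fun j _ => by ring
          rw [this, hsum]
          ring
  rw [hRHS, hceq i]
  rw [show -(2 * α i) - 2 = -(2 * (α i + 1)) by ring]
  ring
end

section
/- Suppose $0<k<K$, $p_{11}\in[0,1)$, and $\frac{p_{11}}{k}-\frac{1}{k}<\frac{p_{11}}{K}-\frac{1}{K}$. Define a sequence $(K^m)_{m\ge 0}$ by $K^0=k$ and $\frac{p_{11}}{K^{m-1}}-\frac{1}{K^m}=\tau^m h_0+(1-\tau^m)h_\infty$ where $h_0=\frac{p_{11}}{k}-\frac 1k$, $h_\infty=\frac{p_{11}}{K}-\frac 1K$, and $\tau\in(0,1)$. If $1/K^1>1/K$, then by induction $1/K^m>1/K$ for all $m\ge 1$; consequently $(K^m)$ is a positive, increasing sequence converging to $K$. -/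
set_option maxHeartbeats 1000000


/-- the iteration scheme of Lemma 2.5(1): the recursively defined
sequence `(K^m)` is positive, increasing and converges to `K`. -/
theorem stmt17 (p11 k K τ : ℝ) (h110 : 0 ≤ p11) (h111 : p11 < 1)
    (hk : 0 < k) (hkK : k < K) (hτ0 : 0 < τ) (hτ1 : τ < 1)
    (hmono : p11 / k - 1 / k < p11 / K - 1 / K)
    (Ks : ℕ → ℝ) (h0 : Ks 0 = k)
    (hrec : ∀ m : ℕ, p11 / Ks m - 1 / Ks (m + 1) =
      τ ^ (m + 1) * (p11 / k - 1 / k) + (1 - τ ^ (m + 1)) * (p11 / K - 1 / K))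
    (hbase : 1 / K < 1 / Ks 1) :
    (∀ m : ℕ, 1 ≤ m → 1 / K < 1 / Ks m) ∧ (∀ m, 0 < Ks m) ∧ Monotone Ks ∧
    Filter.Tendsto Ks Filter.atTop (nhds K) := by
  have hK0 : 0 < K := hk.trans hkK
  have hδ : 0 < 1 / k - 1 / K := by
    have := one_div_lt_one_div_of_lt hk hkK
    linarith
  obtain ⟨μ, hp11μ, hτμ, hμ1⟩ : ∃ μ : ℝ, p11 ≤ μ ∧ τ ≤ μ ∧ μ < 1 :=
    ⟨max p11 τ, le_max_left _ _, le_max_right _ _, max_lt h111 hτ1⟩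
  have hμ0 : 0 < μ := hτ0.trans_le hτμ
  -- main induction
  have key : ∀ m : ℕ, 0 < Ks m ∧ τ ^ (m + 1) * (1 / k - 1 / K) ≤ 1 / Ks m - 1 / K ∧
      1 / Ks m - 1 / K ≤ 2 * (1 / k - 1 / K) * (m + 1) * μ ^ m := by
    intro m
    induction m with
    | zero =>
      refine ⟨by rw [h0]; exact hk, ?_, ?_⟩
      · rw [h0]
        simp only [zero_add, pow_one]
        nlinarith
      · rw [h0]
        push_cast
        simp only [pow_zero]
        nlinarith
    | succ m ih =>
      obtain ⟨hpos, hlow, hhigh⟩ := ih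
      have hne : Ks m ≠ 0 := ne_of_gt hpos
      have e := hrec m
      rw [div_eq_mul_one_div p11 (Ks m), div_eq_mul_one_div p11 k,
        div_eq_mul_one_div p11 K] at e
      have hpow : (0:ℝ) < τ ^ (m + 1) := pow_pos hτ0 (m + 1)
      have hd0 : 0 ≤ 1 / Ks m - 1 / K := le_trans (by positivity) hlow
      have h1 : p11 * (τ ^ (m + 1) * (1 / k - 1 / K)) ≤ p11 * (1 / Ks m - 1 / K) :=
        mul_le_mul_of_nonneg_left hlow h110
      have hlow' : τ ^ (m + 1 + 1) * (1 / k - 1 / K) ≤ 1 / Ks (m + 1) - 1 / K := by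
        rw [pow_succ]
        nlinarith [mul_nonneg (mul_nonneg hpow.le hδ.le) (sub_nonneg.2 hτ1.le)]
      have hposK : 0 < Ks (m + 1) := by
        have : 0 < 1 / Ks (m + 1) := by
          nlinarith [mul_pos (pow_pos hτ0 (m + 1 + 1)) hδ, one_div_pos.2 hK0]
        exact one_div_pos.mp this
      refine ⟨hposK, hlow', ?_⟩
      have h2 : p11 * (1 / Ks m - 1 / K) ≤ μ * (1 / Ks m - 1 / K) :=
        mul_le_mul_of_nonneg_right hp11μ hd0
      have h3 : μ * (1 / Ks m - 1 / K) ≤ μ * (2 * (1 / k - 1 / K) * (m + 1) * μ ^ m) :=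
        mul_le_mul_of_nonneg_left hhigh hμ0.le
      have h4 : τ ^ (m + 1) ≤ μ ^ (m + 1) :=
        pow_le_pow_left₀ hτ0.le hτμ (m + 1)
      have h5 : τ ^ (m + 1) * (1 / k - 1 / K) ≤ μ ^ (m + 1) * (1 / k - 1 / K) :=
        mul_le_mul_of_nonneg_right h4 hδ.le
      have h6 : 0 ≤ p11 * (τ ^ (m + 1) * (1 / k - 1 / K)) := by positivity
      have h7 : (0:ℝ) < μ ^ (m + 1) := pow_pos hμ0 _
      push_cast
      simp only [pow_succ] at h1 h2 h3 h5 h6 h7 e hhigh ⊢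
      nlinarith [mul_nonneg hδ.le h7.le]
  have hpos : ∀ m, 0 < Ks m := fun m => (key m).1
  have hgt : ∀ m : ℕ, 1 ≤ m → 1 / K < 1 / Ks m := by
    intro m _
    have := (key m).2.1
    nlinarith [mul_pos (pow_pos hτ0 (m + 1)) hδ]
  have hmonot : Monotone Ks := by
    apply monotone_nat_of_le_succ
    intro m
    obtain ⟨hp, hlow, -⟩ := key m
    have e := hrec m
    rw [div_eq_mul_one_div p11 (Ks m), div_eq_mul_one_div p11 k,
      div_eq_mul_one_div p11 K] at e
    have hle : 1 / Ks (m + 1) ≤ 1 / Ks m := by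
      nlinarith [mul_le_mul_of_nonneg_left hlow (sub_nonneg.2 h111.le)]
    exact le_of_one_div_le_one_div (hpos (m + 1)) hle
  refine ⟨hgt, hpos, hmonot, ?_⟩
  have hx : Filter.Tendsto (fun m => 1 / Ks m) Filter.atTop (nhds (1 / K)) := by
    have hupper : Filter.Tendsto
        (fun m : ℕ => 1 / K + 2 * (1 / k - 1 / K) * (m + 1) * μ ^ m)
        Filter.atTop (nhds (1 / K)) := by
      have h1 : Filter.Tendsto (fun m : ℕ => (m : ℝ) * μ ^ m) Filter.atTop (nhds 0) :=
        tendsto_self_mul_const_pow_of_lt_one hμ0.le hμ1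
      have h2 : Filter.Tendsto (fun m : ℕ => μ ^ m) Filter.atTop (nhds 0) :=
        tendsto_pow_atTop_nhds_zero_of_lt_one hμ0.le hμ1
      have h3 : Filter.Tendsto (fun m : ℕ => 2 * (1 / k - 1 / K) * (m + 1) * μ ^ m)
          Filter.atTop (nhds 0) := by
        have h4 := (h1.add h2).const_mul (2 * (1 / k - 1 / K))
        simp only [add_zero, mul_zero] at h4
        convert h4 using 2 with m
        ring
      simpa using (tendsto_const_nhds (x := 1 / K) (f := Filter.atTop (α := ℕ))).add h3
    refine tendsto_of_tendsto_of_tendsto_of_le_of_le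
      (tendsto_const_nhds (x := 1 / K) (f := Filter.atTop (α := ℕ))) hupper ?_ ?_
    · intro m
      have := (key m).2.1
      nlinarith [mul_pos (pow_pos hτ0 (m + 1)) hδ]
    · intro m
      have := (key m).2.2
      linarith
  have hKne : (1 / K) ≠ 0 := ne_of_gt (one_div_pos.2 hK0)
  have h5 := hx.inv₀ hKne
  simp only [one_div, inv_inv] at h5
  exact h5
end

section
/- Let $p_c>1$ and $p_c'=p_c/(p_c-1)$. Let $p_{ij}\ge 0$ ($1\le i,j\le 3$) satisfy $p_{11},p_{22}<1$ and $p_{12}p_{21}<(1-p_{11})(1-p_{22})$, and suppose $(k_1^*,k_2^*)$ defined by the linear system in the unknowns $x_1=1/k_1^*$, $x_2=1/k_2^*$: $p_{12}x_2+\frac{p_{13}}{p_c}-(1-p_{11})x_1=\frac{1}{p_c'}$, $p_{21}x_1+\frac{p_{23}}{p_c}-(1-p_{22})x_2=\frac{1}{p_c'}$, satisfies $x_1,x_2>0$. Then the inequality $\frac{p_{31}}{k_1^*}+\frac{p_{32}}{k_2^*}+\frac{p_{33}}{p_c}<1$ is equivalent to $\alpha_3>\frac{1}{p_c-1}$, where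 $\alpha=(\alpha_1,\alpha_2,\alpha_3)$ solves $(I-P)\alpha=-\mathbf 1$ and $\det(I-P)<0$. -/
/-- equivalence (3.20) in Case III of the proof of Theorem 2.4 for
`n = 3`: with `x1 = 1/k₁*`, `x2 = 1/k₂*` solving the bootstrap linear system, the
inequality `p₃₁/k₁* + p₃₂/k₂* + p₃₃/p_c < 1` is equivalent to `α₃ > 1/(p_c-1)`. -/
theorem stmt18 (pc pc' p11 p12 p13 p21 p22 p23 p31 p32 p33 x1 x2 : ℝ)
    (hpc : 1 < pc) (hpc' : pc' = pc / (pc - 1))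
    (h11n : 0 ≤ p11) (h12n : 0 ≤ p12) (h13n : 0 ≤ p13)
    (h21n : 0 ≤ p21) (h22n : 0 ≤ p22) (h23n : 0 ≤ p23)
    (h31n : 0 ≤ p31) (h32n : 0 ≤ p32) (h33n : 0 ≤ p33)
    (h11 : p11 < 1) (h22 : p22 < 1)
    (hdd : p12 * p21 < (1 - p11) * (1 - p22))
    (he1 : p12 * x2 + p13 / pc - (1 - p11) * x1 = 1 / pc')
    (he2 : p21 * x1 + p23 / pc - (1 - p22) * x2 = 1 / pc')
    (hx1 : 0 < x1) (hx2 : 0 < x2)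
    (α : Fin 3 → ℝ)
    (hα : ((1 : Matrix (Fin 3) (Fin 3) ℝ) -
        Matrix.of ![![p11, p12, p13], ![p21, p22, p23], ![p31, p32, p33]]).mulVec α
      = fun _ => -1)
    (hdet : ((1 : Matrix (Fin 3) (Fin 3) ℝ) -
        Matrix.of ![![p11, p12, p13], ![p21, p22, p23], ![p31, p32, p33]]).det < 0) :
    p31 * x1 + p32 * x2 + p33 / pc < 1 ↔ 1 / (pc - 1) < α 2 := by
  subst hpc'
  have hpc0 : (0:ℝ) < pc := by linarith
  have hpc0' : pc ≠ 0 := ne_of_gt hpc0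
  have ht : (0:ℝ) < pc - 1 := by linarith
  have ht' : pc - 1 ≠ 0 := ne_of_gt ht
  have hΔ : 0 < (1-p11)*(1-p22) - p12*p21 := by linarith
  have hmul : 0 < pc * ((1-p11)*(1-p22) - p12*p21) := mul_pos hpc0 hΔ
  have e0 := congrFun hα 0
  have e1 := congrFun hα 1
  have e2 := congrFun hα 2
  simp [Matrix.mulVec, dotProduct, Fin.sum_univ_three, Matrix.sub_apply,
    Matrix.one_apply] at e0 e1 e2
  simp [Matrix.det_fin_three, Matrix.sub_apply, Matrix.one_apply] at hdet
  -- notation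
  set D : ℝ := (1-p11)*(1-p22)*(1-p33) - (1-p11)*p23*p32 - p12*p21*(1-p33)
      - p12*p23*p31 - p13*p21*p32 - p13*(1-p22)*p31 with hDdef
  set L : ℝ := -((p21*p32+(1-p22)*p31) + ((1-p11)*p32+p12*p31)
      + ((1-p11)*(1-p22)-p12*p21)) with hLdef
  have hD : D < 0 := by rw [hDdef]; linarith [hdet]
  -- Cramer: D * α 2 = L
  have key : D * α 2 = L := by
    rw [hDdef, hLdef]
    linear_combination (p21*p32+(1-p22)*p31) * e0 + ((1-p11)*p32+p12*p31) * e1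
      + ((1-p11)*(1-p22)-p12*p21) * e2
  have keym : (pc-1) * (D * α 2) = (pc-1) * L := by rw [key]
  -- clear denominators in the bootstrap system
  have hu13 : pc * (p13 / pc) = p13 := by field_simp
  have hu23 : pc * (p23 / pc) = p23 := by field_simp
  have hu33 : pc * (p33 / pc) = p33 := by field_simp
  have huc : pc * (1 / (pc / (pc - 1))) = pc - 1 := by field_simp
  have he1c : pc*(p12*x2) + p13 - pc*((1-p11)*x1) = pc - 1 := by
    linear_combination pc * he1 - hu13 + huc
  have he2c : pc*(p21*x1) + p23 - pc*((1-p22)*x2) = pc - 1 := by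
    linear_combination pc * he2 - hu23 + huc
  have hX1 : pc*((1-p11)*(1-p22)-p12*p21)*x1
      = (1-p22)*(p13-(pc-1)) + p12*(p23-(pc-1)) := by
    linear_combination (-(1-p22)) * he1c - p12 * he2c
  have hX2 : pc*((1-p11)*(1-p22)-p12*p21)*x2
      = (1-p11)*(p23-(pc-1)) + p21*(p13-(pc-1)) := by
    linear_combination (-p21) * he1c - (1-p11) * he2c
  set Q : ℝ := p31*((1-p22)*(p13-(pc-1)) + p12*(p23-(pc-1)))
      + p32*((1-p11)*(p23-(pc-1)) + p21*(p13-(pc-1)))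
      + ((1-p11)*(1-p22)-p12*p21)*p33 with hQdef
  have hQeq : pc*((1-p11)*(1-p22)-p12*p21) * (p31*x1 + p32*x2 + p33/pc) = Q := by
    rw [hQdef]
    linear_combination p31*hX1 + p32*hX2 + ((1-p11)*(1-p22)-p12*p21)*hu33
  -- key polynomial identity:  pcΔ - Q = D - (pc-1)*L
  have hident : pc*((1-p11)*(1-p22)-p12*p21) - Q = D - (pc-1)*L := by
    rw [hQdef, hDdef, hLdef]; ring
  constructor
  · intro h
    have h' := mul_lt_mul_of_pos_left h hmul
    have hQlt : Q < pc*((1-p11)*(1-p22)-p12*p21) := by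
      rw [← hQeq]; linarith [h']
    have hkey2 : (pc-1)*L < D := by linarith [hident]
    have key2 : (pc-1)*(D * α 2) < D := by linarith [keym, hkey2]
    rw [div_lt_iff₀ ht]
    by_contra hcon
    push_neg at hcon
    have h3 := mul_le_mul_of_nonpos_left hcon (le_of_lt hD)
    linarith [key2, h3]
  · intro h
    rw [div_lt_iff₀ ht] at h
    have h3 := mul_lt_mul_of_neg_left h hD
    have hkey2 : (pc-1)*L < D := by linarith [keym, h3]
    have hQlt : Q < pc*((1-p11)*(1-p22)-p12*p21) := by linarith [hident]
    have h' : pc*((1-p11)*(1-p22)-p12*p21) * (p31*x1 + p32*x2 + p33/pc)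
        < pc*((1-p11)*(1-p22)-p12*p21) * 1 := by rw [hQeq, mul_one]; exact hQlt
    exact lt_of_mul_lt_mul_left h' (le_of_lt hmul)
end

section
/- Let $\Omega\subset\mathbb{R}^d$ be a smooth bounded domain and $\lambda>\lambda_1$, the first Dirichlet eigenvalue of $-\Delta$ on $\Omega$, with positive eigenfunction $\varphi_1$. Suppose nonnegative $u_1,\dots,u_n\in L^1(\Omega)$ are $L^1_\delta$-solutions of $-\Delta u_i=f_i$ with $\sum_{i=1}^n f_i\ge\lambda\sum_{i=1}^n u_i - C_1$ for a constant $C_1>0$. Then $\sum_{i=1}^n\int_\Omega u_i\varphi_1 \le \frac{C_1}{\lambda-\lambda_1}\int_\Omega\varphi_1$; in particular $\sum_{i=1}^n\|u_i\|_{L^1_\delta}\le M$ with $M$ independent of the solution. -/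
open MeasureTheory

/-- The distance to the boundary of `Ω`. -/
noncomputable def dlt {d : ℕ} (Ω : Set (EuclideanSpace ℝ (Fin d)))
    (x : EuclideanSpace ℝ (Fin d)) : ℝ :=
  Metric.infDist x (frontier Ω)

/-- `u` is an `L¹_δ`-solution of `-Δu = f` on `Ω`. -/
def IsL1DeltaSol {d : ℕ} (Ω : Set (EuclideanSpace ℝ (Fin d)))
    (u f : EuclideanSpace ℝ (Fin d) → ℝ) : Prop :=
  IntegrableOn u Ω ∧ IntegrableOn (fun x => f x * dlt Ω x) Ω ∧
  ∀ φ : EuclideanSpace ℝ (Fin d) → ℝ, ContDiffOn ℝ 2 φ (closure Ω) →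
    (∀ x ∈ frontier Ω, φ x = 0) →
    -∫ x in Ω, u x * lap φ x = ∫ x in Ω, f x * φ x

lemma mul_cont_integrable {d : ℕ} {Ω : Set (EuclideanSpace ℝ (Fin d))}
    (hΩo : IsOpen Ω) (hΩb : Bornology.IsBounded Ω)
    {g h : EuclideanSpace ℝ (Fin d) → ℝ}
    (hg : IntegrableOn g Ω) (hh : ContinuousOn h (closure Ω)) :
    IntegrableOn (fun x => g x * h x) Ω := by
  have hΩm := hΩo.measurableSet
  obtain ⟨M, hM⟩ := (hΩb.isCompact_closure).exists_bound_of_continuousOn hh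
  have hm : AEStronglyMeasurable (fun x => g x * h x) (volume.restrict Ω) :=
    hg.aestronglyMeasurable.mul ((hh.mono subset_closure).aestronglyMeasurable hΩm)
  refine Integrable.mono' (hg.norm.const_mul M) hm ?_
  filter_upwards [ae_restrict_mem hΩm] with x hx
  calc ‖g x * h x‖ = ‖g x‖ * ‖h x‖ := norm_mul _ _
    _ ≤ ‖g x‖ * M := by
        have := hM x (subset_closure hx)
        have h0 : 0 ≤ ‖g x‖ := norm_nonneg _
        nlinarith
    _ = M * ‖g x‖ := mul_comm _ _


set_option maxHeartbeats 1000000 in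
/-- Proposition 5.1: the uniform `L¹_δ` bound under the
superlinearity condition `∑ f_i ≥ λ ∑ u_i - C₁` with `λ > λ₁`. -/
theorem stmt19 (d n : ℕ) (Ω : Set (EuclideanSpace ℝ (Fin d)))
    (hΩo : IsOpen Ω) (hΩb : Bornology.IsBounded Ω) (hΩne : Ω.Nonempty)
    (φ₁ : EuclideanSpace ℝ (Fin d) → ℝ) (lam1 lam C1 c1 c2 : ℝ)
    (hlam1 : 0 < lam1) (hlam : lam1 < lam) (hC1 : 0 < C1)
    (hc1 : 0 < c1) (hc2 : 0 < c2)
    (hφreg : ContDiffOn ℝ 2 φ₁ (closure Ω)) (hφbd : ∀ x ∈ frontier Ω, φ₁ x = 0)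
    (hφpos : ∀ x ∈ Ω, 0 < φ₁ x)
    (hφeig : ∀ x ∈ Ω, -lap φ₁ x = lam1 * φ₁ x)
    (hφδ : ∀ x ∈ Ω, c1 * dlt Ω x ≤ φ₁ x ∧ φ₁ x ≤ c2 * dlt Ω x)
    (u f : Fin n → EuclideanSpace ℝ (Fin d) → ℝ)
    (hu0 : ∀ i, ∀ x ∈ Ω, 0 ≤ u i x)
    (hsol : ∀ i, IsL1DeltaSol Ω (u i) (f i))
    (hsup : ∀ x ∈ Ω, lam * ∑ i, u i x - C1 ≤ ∑ i, f i x) :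
    ∑ i, ∫ x in Ω, u i x * φ₁ x ≤ C1 / (lam - lam1) * ∫ x in Ω, φ₁ x ∧
    ∑ i, ∫ x in Ω, u i x * dlt Ω x ≤
      C1 / ((lam - lam1) * c1) * ∫ x in Ω, φ₁ x := by
  have hΩm : MeasurableSet Ω := hΩo.measurableSet
  have hφc : ContinuousOn φ₁ (closure Ω) := hφreg.continuousOn
  -- the frontier is nonempty, else φ₁ would vanish
  by_cases hfr : (frontier Ω).Nonempty
  swap
  · exfalso
    obtain ⟨x, hx⟩ := hΩne
    have h1 := hφpos x hx
    have h2 := (hφδ x hx).2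
    rw [Set.not_nonempty_iff_eq_empty] at hfr
    simp only [dlt, hfr, Metric.infDist_empty, mul_zero] at h2
    linarith
  have hδpos : ∀ x ∈ Ω, 0 < dlt Ω x := by
    intro x hx
    have hx' : x ∉ frontier Ω := by
      rw [frontier, hΩo.interior_eq]
      exact fun h => h.2 hx
    exact (isClosed_frontier.notMem_iff_infDist_pos hfr).1 hx'
  have hδc : ContinuousOn (dlt Ω) (closure Ω) :=
    (Metric.continuous_infDist_pt (frontier Ω)).continuousOn
  have hμ : volume Ω < ⊤ := hΩb.measure_lt_top
  have hφint : IntegrableOn φ₁ Ω :=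
    (hφc.integrableOn_compact hΩb.isCompact_closure).mono_set subset_closure
  have huφ : ∀ i, IntegrableOn (fun x => u i x * φ₁ x) Ω :=
    fun i => mul_cont_integrable hΩo hΩb (hsol i).1 hφc
  have huδ : ∀ i, IntegrableOn (fun x => u i x * dlt Ω x) Ω :=
    fun i => mul_cont_integrable hΩo hΩb (hsol i).1 hδc
  have hfφ : ∀ i, IntegrableOn (fun x => f i x * φ₁ x) Ω := by
    intro i
    have hfδ := (hsol i).2.1
    have hmeas : AEStronglyMeasurable (fun x => f i x * φ₁ x) (volume.restrict Ω) := by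
      have h1 : AEStronglyMeasurable
          (fun x => f i x * dlt Ω x * (φ₁ x / dlt Ω x)) (volume.restrict Ω) :=
        (hfδ.aestronglyMeasurable.aemeasurable.mul
          ((((hφc.mono subset_closure).aestronglyMeasurable hΩm).aemeasurable).div
            (((hδc.mono subset_closure).aestronglyMeasurable hΩm).aemeasurable))).aestronglyMeasurable
      refine h1.congr ?_
      filter_upwards [ae_restrict_mem hΩm] with x hx
      field_simp
      rw [mul_right_comm, mul_div_assoc, div_self (hδpos x hx).ne', mul_one]
    refine Integrable.mono' (hfδ.norm.const_mul c2) hmeas ?_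
    filter_upwards [ae_restrict_mem hΩm] with x hx
    have h2 := (hφδ x hx).2
    have hδ := (hδpos x hx).le
    have hφ := (hφpos x hx).le
    rw [norm_mul, norm_mul, Real.norm_eq_abs (φ₁ x), abs_of_nonneg hφ,
      Real.norm_eq_abs (dlt Ω x), abs_of_nonneg hδ]
    have h0 : 0 ≤ ‖f i x‖ := norm_nonneg _
    calc ‖f i x‖ * φ₁ x ≤ ‖f i x‖ * (c2 * dlt Ω x) := by nlinarith
      _ = c2 * (‖f i x‖ * dlt Ω x) := by ring
  -- key identity from testing with φ₁
  have key : ∀ i, lam1 * ∫ x in Ω, u i x * φ₁ x = ∫ x in Ω, f i x * φ₁ x := by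
    intro i
    have h := (hsol i).2.2 φ₁ hφreg hφbd
    calc lam1 * ∫ x in Ω, u i x * φ₁ x
        = ∫ x in Ω, lam1 * (u i x * φ₁ x) := (integral_const_mul _ _).symm
      _ = ∫ x in Ω, -(u i x * lap φ₁ x) := by
          refine setIntegral_congr_fun hΩm fun x hx => ?_
          have hxe := hφeig x hx
          linear_combination (-(u i x)) * hxe
      _ = -∫ x in Ω, u i x * lap φ₁ x := integral_neg _
      _ = ∫ x in Ω, f i x * φ₁ x := h
  set S := ∑ i, ∫ x in Ω, u i x * φ₁ x with hS
  have hintuφ : IntegrableOn (fun x => ∑ i, u i x * φ₁ x) Ω :=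
    integrable_finset_sum _ fun i _ => huφ i
  have hsum1 : lam1 * S = ∫ x in Ω, (∑ i, f i x) * φ₁ x := by
    rw [hS, Finset.mul_sum]
    rw [Finset.sum_congr rfl fun i _ => key i]
    rw [← integral_finset_sum _ fun i _ => hfφ i]
    refine setIntegral_congr_fun hΩm fun x hx => ?_
    rw [Finset.sum_mul]
  have hlhsint : IntegrableOn (fun x => (lam * (∑ i, u i x) - C1) * φ₁ x) Ω := by
    have h1 : IntegrableOn (fun x => lam * (∑ i, u i x) - C1) Ω := by
      have h2 : IntegrableOn (fun x => ∑ i, u i x) Ω :=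
        integrable_finset_sum _ fun i _ => (hsol i).1
      exact (h2.const_mul lam).sub (integrableOn_const hμ.ne)
    exact mul_cont_integrable hΩo hΩb h1 hφc
  have hineq : ∫ x in Ω, (lam * (∑ i, u i x) - C1) * φ₁ x
      ≤ ∫ x in Ω, (∑ i, f i x) * φ₁ x := by
    refine setIntegral_mono_on hlhsint ?_ hΩm fun x hx => ?_
    · have h2 : IntegrableOn (fun x => ∑ i, f i x * φ₁ x) Ω :=
        integrable_finset_sum _ fun i _ => hfφ i
      exact h2.congr_fun (fun x hx => (Finset.sum_mul ..).symm) hΩm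
    · exact mul_le_mul_of_nonneg_right (hsup x hx) (hφpos x hx).le
  have hexp : ∫ x in Ω, (lam * (∑ i, u i x) - C1) * φ₁ x
      = lam * S - C1 * ∫ x in Ω, φ₁ x := by
    have heq : ∀ x, (lam * (∑ i, u i x) - C1) * φ₁ x
        = lam * (∑ i, u i x * φ₁ x) - C1 * φ₁ x := by
      intro x
      have h1 : (∑ i, u i x) * φ₁ x = ∑ i, u i x * φ₁ x := Finset.sum_mul ..
      linear_combination lam * h1
    simp_rw [heq]
    rw [integral_sub (hintuφ.const_mul lam) (hφint.const_mul C1),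
      integral_const_mul, integral_const_mul, hS,
      integral_finset_sum _ fun i _ => huφ i]
  have hkey2 : (lam - lam1) * S ≤ C1 * ∫ x in Ω, φ₁ x := by
    rw [hexp] at hineq
    rw [← hsum1] at hineq
    nlinarith
  have hd : (0:ℝ) < lam - lam1 := by linarith
  have hfirst : S ≤ C1 / (lam - lam1) * ∫ x in Ω, φ₁ x := by
    rw [div_mul_eq_mul_div, le_div_iff₀ hd]
    nlinarith
  refine ⟨hfirst, ?_⟩
  have hsecond : ∀ i, ∫ x in Ω, u i x * dlt Ω x
      ≤ (1/c1) * ∫ x in Ω, u i x * φ₁ x := by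
    intro i
    rw [← integral_const_mul]
    refine setIntegral_mono_on (huδ i) ((huφ i).const_mul _) hΩm fun x hx => ?_
    have h1 := (hφδ x hx).1
    have h2 := hu0 i x hx
    rw [one_div, inv_mul_eq_div, le_div_iff₀ hc1]
    nlinarith
  calc ∑ i, ∫ x in Ω, u i x * dlt Ω x
      ≤ ∑ i, (1/c1) * ∫ x in Ω, u i x * φ₁ x :=
        Finset.sum_le_sum fun i _ => hsecond i
    _ = (1/c1) * S := by rw [← Finset.mul_sum, hS]
    _ ≤ (1/c1) * (C1 / (lam - lam1) * ∫ x in Ω, φ₁ x) := by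
        have : (0:ℝ) ≤ 1/c1 := by positivity
        nlinarith
    _ = C1 / ((lam - lam1) * c1) * ∫ x in Ω, φ₁ x := by
        have hh : (1:ℝ)/c1 * (C1/(lam-lam1)) = C1/((lam-lam1)*c1) := by
          field_simp
        rw [← mul_assoc, hh]
end
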